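/- Let d ≥ 1 and let C be a Hermitian d×d complex matrix. Then for every d×d density matrix ρ, one has −Tr[ρ log ρ] − Tr[ρ C] ≤ log Tr[exp(−C)], with equality for the Gibbs state ρ = exp(−C)/Tr[exp(−C)]. Consequently, the supremum over all d×d density matrices ρ of (−Tr[ρ log ρ] − Tr[ρ C]) equals log Tr[exp(−C)]. -/

import Mathlib

open Matrix ComplexOrder

/-- The matrix logarithm of a Hermitian matrix, defined through its spectral
decomposition (with `Real.log 0 = 0` as convention on null eigenvalues); junk value `0`
on non-Hermitian input. -/
noncomputable def matLog {n : Type*} [Fintype n] [DecidableEq n] (A : Matrix n n ℂ) :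
    Matrix n n ℂ :=
  if h : A.IsHermitian then
    (h.eigenvectorUnitary : Matrix n n ℂ) *
      Matrix.diagonal (fun i => (Real.log (h.eigenvalues i) : ℂ)) *
      (h.eigenvectorUnitary : Matrix n n ℂ)ᴴ
  else 0

/-- The von Neumann entropy `S(ρ) = −Tr[ρ log ρ]` (with the convention `0·log 0 = 0`). -/
noncomputable def vnEntropy {n : Type*} [Fintype n] [DecidableEq n]
    (ρ : Matrix n n ℂ) : ℝ :=
  -((ρ * matLog ρ).trace).re

variable {n : Type*} [Fintype n] [DecidableEq n]

lemma herm_decomp (V : Matrix.unitaryGroup n ℂ) (g : n → ℝ) (A : Matrix n n ℂ)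
    (hA : A = (V : Matrix n n ℂ) * diagonal (fun i => (g i : ℂ)) * (V : Matrix n n ℂ)ᴴ) :
    A.IsHermitian := by
  subst hA
  unfold Matrix.IsHermitian
  simp only [conjTranspose_mul, conjTranspose_conjTranspose, diagonal_conjTranspose, mul_assoc]
  congr 2
  ext i j
  simp [Pi.star_def]

lemma spectrum_decomp (V : Matrix.unitaryGroup n ℂ) (g : n → ℝ) (A : Matrix n n ℂ)
    (hA : A = (V : Matrix n n ℂ) * diagonal (fun i => (g i : ℂ)) * (V : Matrix n n ℂ)ᴴ) :
    spectrum ℝ A = Set.range g := by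
  ext x
  conv_lhs => rw [hA, ← Matrix.star_eq_conjTranspose, Unitary.spectrum_star_right_conjugate,
    ← spectrum.algebraMap_mem_iff ℂ, spectrum_diagonal]
  simp [Complex.coe_algebraMap, eq_comm]

noncomputable def decompHom (V : Matrix.unitaryGroup n ℂ) (g : n → ℝ) (A : Matrix n n ℂ)
    (hA : A = (V : Matrix n n ℂ) * diagonal (fun i => (g i : ℂ)) * (V : Matrix n n ℂ)ᴴ) :
    C(spectrum ℝ A, ℝ) →⋆ₐ[ℝ] (Matrix n n ℂ) where
  toFun := fun f => (V : Matrix n n ℂ) *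
    diagonal (Complex.ofReal ∘ f ∘ (fun i ↦ ⟨g i, by
      rw [spectrum_decomp V g A hA]; exact Set.mem_range_self i⟩))
    * star (V : Matrix n n ℂ)
  map_one' := by simp [Pi.one_def (M := fun _ : n ↦ ℂ)]
  map_mul' f f' := by
    have {a b c d e f : Matrix n n ℂ} : (a * b * c) * (d * e * f) = a * (b * (c * d) * e) * f := by
      simp only [mul_assoc]
    simp only [this, ContinuousMap.coe_mul, SetLike.coe_mem, Unitary.star_mul_self_of_mem, mul_one,
      diagonal_mul_diagonal, Function.comp_apply]
    congr! with i
    simp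
  map_zero' := by simp [Pi.zero_def (M := fun _ : n ↦ ℂ)]
  map_add' f f' := by
    simp only [ContinuousMap.coe_add, ← add_mul, ← mul_add, diagonal_add, Function.comp_apply]
    congr! with i
    simp
  commutes' r := by
    simp only [Function.comp_def, algebraMap_apply, smul_eq_mul, mul_one]
    rw [← mul_one (algebraMap _ _ _), ← Unitary.coe_mul_star_self V,
      ← Algebra.left_comm, Unitary.coe_star, mul_assoc]
    congr!
  map_star' f := by
    simp only [star_trivial, StarMul.star_mul, star_star, star_eq_conjTranspose (diagonal _),
      diagonal_conjTranspose, mul_assoc]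
    congr!
    ext
    simp

lemma decompHom_continuous (V : Matrix.unitaryGroup n ℂ) (g : n → ℝ) (A : Matrix n n ℂ)
    (hA : A = (V : Matrix n n ℂ) * diagonal (fun i => (g i : ℂ)) * (V : Matrix n n ℂ)ᴴ) :
    Continuous (decompHom V g A hA) := by
  have h0 : FiniteDimensional ℝ C(spectrum ℝ A, ℝ) :=
    FiniteDimensional.of_injective (ContinuousMap.coeFnLinearMap ℝ (M := ℝ)) DFunLike.coe_injective
  exact LinearMap.continuous_of_finiteDimensional
    ((decompHom V g A hA : C(spectrum ℝ A, ℝ) →ₐ[ℝ] Matrix n n ℂ).toLinearMap)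

lemma cfc_decomp (V : Matrix.unitaryGroup n ℂ) (g : n → ℝ) (A : Matrix n n ℂ)
    (hA : A = (V : Matrix n n ℂ) * diagonal (fun i => (g i : ℂ)) * (V : Matrix n n ℂ)ᴴ)
    (f : ℝ → ℝ) :
    cfc f A = (V : Matrix n n ℂ) * diagonal (fun i => (f (g i) : ℂ)) * (V : Matrix n n ℂ)ᴴ := by
  have hherm : A.IsHermitian := herm_decomp V g A hA
  have hsa : IsSelfAdjoint A := hherm
  have hid : (decompHom V g A hA) (ContinuousMap.restrict (spectrum ℝ A) (.id ℝ)) = A := by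
    conv_rhs => rw [hA]
    simp only [decompHom]
    congr!
  have hhom := cfcHom_eq_of_continuous_of_map_id hsa (decompHom V g A hA)
    (decompHom_continuous V g A hA) hid
  rw [cfc_apply f A hsa (Matrix.finite_real_spectrum.continuousOn f), hhom]
  simp only [decompHom]
  rfl

lemma matLog_eq_cfc (A : Matrix n n ℂ) (h : A.IsHermitian) : matLog A = cfc Real.log A := by
  rw [matLog, dif_pos h,
    cfc_decomp h.eigenvectorUnitary h.eigenvalues A h.spectral_theorem Real.log]

lemma unitary_isUnit (V : Matrix.unitaryGroup n ℂ) : IsUnit (V : Matrix n n ℂ) :=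
  ⟨Unitary.toUnits V, rfl⟩

lemma unitaryInv_eq (V : Matrix.unitaryGroup n ℂ) : (V : Matrix n n ℂ)⁻¹ = (V : Matrix n n ℂ)ᴴ := by
  apply Matrix.inv_eq_left_inv
  simpa [Matrix.star_eq_conjTranspose] using (Matrix.mem_unitaryGroup_iff'.mp V.2)

lemma exp_decomp (V : Matrix.unitaryGroup n ℂ) (g : n → ℝ) (A : Matrix n n ℂ)
    (hA : A = (V : Matrix n n ℂ) * diagonal (fun i => (g i : ℂ)) * (V : Matrix n n ℂ)ᴴ) :
    NormedSpace.exp (-A) =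
      (V : Matrix n n ℂ) * diagonal (fun i => (Real.exp (-g i) : ℂ)) * (V : Matrix n n ℂ)ᴴ := by
  have h1 : -A = (V : Matrix n n ℂ) * diagonal (fun i => -(g i : ℂ)) * (V : Matrix n n ℂ)⁻¹ := by
    rw [unitaryInv_eq, hA]
    have : diagonal (fun i => -(g i : ℂ)) = -diagonal (fun i => (g i : ℂ)) := by
      ext i j
      by_cases h : i = j <;> simp [diagonal_apply, h]
    rw [this]
    simp only [Matrix.neg_mul, Matrix.mul_neg]
  rw [h1, Matrix.exp_conj _ _ (unitary_isUnit V), unitaryInv_eq,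
    Matrix.exp_diagonal, Pi.exp_def]
  congr 2
  funext i
  simp [← Complex.exp_eq_exp_ℂ, ← Complex.ofReal_neg, Complex.ofReal_exp]

lemma conjT_mul_self (V : Matrix.unitaryGroup n ℂ) :
    (V : Matrix n n ℂ)ᴴ * (V : Matrix n n ℂ) = 1 := by
  simpa [Matrix.star_eq_conjTranspose] using (Matrix.mem_unitaryGroup_iff'.mp V.2)

lemma self_mul_conjT (V : Matrix.unitaryGroup n ℂ) :
    (V : Matrix n n ℂ) * (V : Matrix n n ℂ)ᴴ = 1 := by
  simpa [Matrix.star_eq_conjTranspose] using (Matrix.mem_unitaryGroup_iff.mp V.2)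

lemma mul_decomp (V : Matrix.unitaryGroup n ℂ) (a b : n → ℂ) :
    ((V : Matrix n n ℂ) * diagonal a * (V : Matrix n n ℂ)ᴴ) *
      ((V : Matrix n n ℂ) * diagonal b * (V : Matrix n n ℂ)ᴴ) =
    (V : Matrix n n ℂ) * diagonal (fun i => a i * b i) * (V : Matrix n n ℂ)ᴴ := by
  have : ∀ (x y z w u v : Matrix n n ℂ), (x * y * z) * (w * u * v) = x * (y * (z * w) * u) * v := by
    intros; simp only [mul_assoc]
  rw [this, conjT_mul_self, mul_one, diagonal_mul_diagonal]

lemma trace_decomp (V : Matrix.unitaryGroup n ℂ) (a : n → ℂ) :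
    ((V : Matrix n n ℂ) * diagonal a * (V : Matrix n n ℂ)ᴴ).trace = ∑ i, a i := by
  rw [Matrix.trace_mul_cycle, conjT_mul_self, one_mul, Matrix.trace_diagonal]

lemma smul_decomp (V : Matrix.unitaryGroup n ℂ) (a : n → ℂ) (z : ℂ) :
    z • ((V : Matrix n n ℂ) * diagonal a * (V : Matrix n n ℂ)ᴴ) =
    (V : Matrix n n ℂ) * diagonal (fun i => z * a i) * (V : Matrix n n ℂ)ᴴ := by
  rw [← smul_mul_assoc, ← mul_smul_comm]
  congr 2
  ext i j
  by_cases h : i = j <;> simp [diagonal_apply, h]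

lemma scalar_gibbs_eq {d : ℕ} (μ : Fin d → ℝ) (hd : 1 ≤ d) (S : ℝ)
    (hSdef : S = ∑ i, Real.exp (-μ i)) :
    -(∑ i, (S⁻¹ * Real.exp (-μ i)) * Real.log (S⁻¹ * Real.exp (-μ i)))
      - ∑ i, (S⁻¹ * Real.exp (-μ i)) * μ i = Real.log S := by
  have hS : 0 < S := hSdef ▸ Finset.sum_pos (fun i _ => Real.exp_pos _)
    ⟨⟨0, hd⟩, Finset.mem_univ _⟩
  have hlog : ∀ i, Real.log (S⁻¹ * Real.exp (-μ i)) = -Real.log S - μ i := by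
    intro i
    rw [Real.log_mul (by positivity) (Real.exp_ne_zero _), Real.log_inv, Real.log_exp]
    ring
  have hgsum : ∑ i, S⁻¹ * Real.exp (-μ i) = 1 := by
    rw [← Finset.mul_sum, ← hSdef]
    field_simp
  calc -(∑ i, (S⁻¹ * Real.exp (-μ i)) * Real.log (S⁻¹ * Real.exp (-μ i)))
      - ∑ i, (S⁻¹ * Real.exp (-μ i)) * μ i
      = ∑ i, (S⁻¹ * Real.exp (-μ i)) * Real.log S := by
        rw [← Finset.sum_neg_distrib, ← Finset.sum_sub_distrib]
        congr 1
        funext i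
        rw [hlog i]
        ring
    _ = (∑ i, S⁻¹ * Real.exp (-μ i)) * Real.log S := by rw [Finset.sum_mul]
    _ = Real.log S := by rw [hgsum, one_mul]

lemma scalar_jensen {d : ℕ} (p b : Fin d → ℝ) (hp : ∀ i, 0 ≤ p i) (hsum : ∑ i, p i = 1) :
    -(∑ i, p i * Real.log (p i)) - ∑ i, p i * b i ≤ Real.log (∑ i, Real.exp (-b i)) := by
  classical
  set t := Finset.univ.filter (fun i => p i ≠ 0) with ht
  have hts : ∑ i ∈ t, p i = 1 := by rw [ht, Finset.sum_filter_ne_zero]; exact hsum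
  have htpos : ∀ i ∈ t, 0 < p i := fun i hi => lt_of_le_of_ne (hp i)
    (Ne.symm (Finset.mem_filter.mp hi).2)
  have htne : t.Nonempty := by
    by_contra h
    rw [Finset.not_nonempty_iff_eq_empty] at h
    rw [h, Finset.sum_empty] at hts
    norm_num at hts
  have h1 : ∑ i, p i * Real.log (p i) = ∑ i ∈ t, p i * Real.log (p i) :=
    (Finset.sum_filter_of_ne (fun i _ h => by
      intro hpi; apply h; rw [hpi]; ring)).symm
  have h2 : ∑ i, p i * b i = ∑ i ∈ t, p i * b i :=
    (Finset.sum_filter_of_ne (fun i _ h => by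
      intro hpi; apply h; rw [hpi]; ring)).symm
  have jensen := (strictConcaveOn_log_Ioi.concaveOn).le_map_sum
    (t := t) (w := p) (p := fun i => Real.exp (-b i) / p i)
    (fun i _ => hp i) hts
    (fun i hi => Set.mem_Ioi.mpr (div_pos (Real.exp_pos _) (htpos i hi)))
  have hx : ∑ i ∈ t, p i • (Real.exp (-b i) / p i) = ∑ i ∈ t, Real.exp (-b i) := by
    apply Finset.sum_congr rfl
    intro i hi
    rw [smul_eq_mul, mul_div_cancel₀ _ (ne_of_gt (htpos i hi))]
  have hlogx : ∀ i ∈ t, Real.log (Real.exp (-b i) / p i) = -b i - Real.log (p i) := by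
    intro i hi
    rw [Real.log_div (Real.exp_ne_zero _) (ne_of_gt (htpos i hi)), Real.log_exp]
  rw [hx] at jensen
  have key : ∑ i ∈ t, p i * (-b i - Real.log (p i)) ≤ Real.log (∑ i ∈ t, Real.exp (-b i)) := by
    refine le_trans (le_of_eq ?_) jensen
    apply Finset.sum_congr rfl
    intro i hi
    rw [smul_eq_mul, hlogx i hi]
  have hmono : Real.log (∑ i ∈ t, Real.exp (-b i)) ≤ Real.log (∑ i, Real.exp (-b i)) := by
    apply Real.log_le_log
    · exact Finset.sum_pos (fun i _ => Real.exp_pos _) htne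
    · exact Finset.sum_le_sum_of_subset_of_nonneg (Finset.subset_univ t)
        (fun i _ _ => le_of_lt (Real.exp_pos _))
  refine le_trans ?_ (le_trans key hmono)
  rw [h1, h2, ← Finset.sum_neg_distrib, ← Finset.sum_sub_distrib]
  apply le_of_eq
  apply Finset.sum_congr rfl
  intro i _
  ring

lemma scalar_exp_convex {d : ℕ} (w : Fin d → Fin d → ℝ) (μ : Fin d → ℝ)
    (hw : ∀ i j, 0 ≤ w i j) (hrow : ∀ i, ∑ j, w i j = 1) (hcol : ∀ j, ∑ i, w i j = 1) :
    ∑ i, Real.exp (-(∑ j, w i j * μ j)) ≤ ∑ j, Real.exp (-μ j) := by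
  have step : ∀ i, Real.exp (-(∑ j, w i j * μ j)) ≤ ∑ j, w i j * Real.exp (-μ j) := by
    intro i
    have := convexOn_exp.map_sum_le (t := Finset.univ) (w := w i) (p := fun j => -μ j)
      (fun j _ => hw i j) (hrow i) (fun j _ => Set.mem_univ _)
    refine le_trans (le_of_eq ?_) (le_trans this (le_of_eq ?_))
    · congr 1
      rw [← Finset.sum_neg_distrib]
      apply Finset.sum_congr rfl
      intro j _
      rw [smul_eq_mul]
      ring
    · apply Finset.sum_congr rfl
      intro j _
      rw [smul_eq_mul]
  calc ∑ i, Real.exp (-(∑ j, w i j * μ j)) ≤ ∑ i, ∑ j, w i j * Real.exp (-μ j) :=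
        Finset.sum_le_sum (fun i _ => step i)
    _ = ∑ j, (∑ i, w i j) * Real.exp (-μ j) := by
        rw [Finset.sum_comm]
        apply Finset.sum_congr rfl
        intro j _
        rw [Finset.sum_mul]
    _ = ∑ j, Real.exp (-μ j) := by
        apply Finset.sum_congr rfl
        intro j _
        rw [hcol j, one_mul]

lemma trace_mix (V₁ V₂ : Matrix.unitaryGroup n ℂ) (a c : n → ℂ) :
    (((V₁ : Matrix n n ℂ) * diagonal a * (V₁ : Matrix n n ℂ)ᴴ) *
     ((V₂ : Matrix n n ℂ) * diagonal c * (V₂ : Matrix n n ℂ)ᴴ)).trace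
    = (diagonal a * (((V₁ : Matrix n n ℂ)ᴴ * (V₂ : Matrix n n ℂ)) * diagonal c *
        ((V₁ : Matrix n n ℂ)ᴴ * (V₂ : Matrix n n ℂ))ᴴ)).trace := by
  rw [show ((V₁ : Matrix n n ℂ) * diagonal a * (V₁ : Matrix n n ℂ)ᴴ) *
      ((V₂ : Matrix n n ℂ) * diagonal c * (V₂ : Matrix n n ℂ)ᴴ)
      = (V₁ : Matrix n n ℂ) * (diagonal a * ((V₁ : Matrix n n ℂ)ᴴ *
        ((V₂ : Matrix n n ℂ) * (diagonal c * (V₂ : Matrix n n ℂ)ᴴ)))) from by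
    simp only [mul_assoc]]
  rw [Matrix.trace_mul_comm]
  congr 1
  rw [conjTranspose_mul, conjTranspose_conjTranspose]
  simp only [mul_assoc]


lemma vnEntropy_decomp (V : Matrix.unitaryGroup n ℂ) (g : n → ℝ) (A : Matrix n n ℂ)
    (hA : A = (V : Matrix n n ℂ) * diagonal (fun i => (g i : ℂ)) * (V : Matrix n n ℂ)ᴴ) :
    vnEntropy A = -∑ i, g i * Real.log (g i) := by
  have hml : matLog A = (V : Matrix n n ℂ) * diagonal (fun i => (Real.log (g i) : ℂ)) *
      (V : Matrix n n ℂ)ᴴ := by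
    rw [matLog_eq_cfc A (herm_decomp V g A hA), cfc_decomp V g A hA]
  rw [vnEntropy, hml, hA, mul_decomp, trace_decomp]
  have : ∑ i, (g i : ℂ) * (Real.log (g i) : ℂ) = ((∑ i, g i * Real.log (g i) : ℝ) : ℂ) := by
    push_cast; rfl
  rw [this, Complex.ofReal_re]

lemma trace_mul_decomp_re (V : Matrix.unitaryGroup n ℂ) (a b : n → ℝ) :
    ((((V : Matrix n n ℂ) * diagonal (fun i => (a i : ℂ)) * (V : Matrix n n ℂ)ᴴ) *
      ((V : Matrix n n ℂ) * diagonal (fun i => (b i : ℂ)) * (V : Matrix n n ℂ)ᴴ)).trace).re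
      = ∑ i, a i * b i := by
  rw [mul_decomp, trace_decomp]
  have : ∑ i, (a i : ℂ) * (b i : ℂ) = ((∑ i, a i * b i : ℝ) : ℂ) := by push_cast; rfl
  rw [this, Complex.ofReal_re]

/-- **Gibbs variational principle (Eq. (34) of the paper).** For Hermitian `C`,
`S(ρ) − Tr[ρC] ≤ log Tr[exp(−C)]` for every density matrix ρ, with equality at the
Gibbs state `ρ = exp(−C)/Tr[exp(−C)]`; consequently the supremum over density matrices
equals `log Tr[exp(−C)]` and is attained. -/
theorem gibbs_variational_principle
    {d : ℕ} (hd : 1 ≤ d) (C : Matrix (Fin d) (Fin d) ℂ) (hC : C.IsHermitian) :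
    (vnEntropy (((NormedSpace.exp (-C)).trace)⁻¹ • NormedSpace.exp (-C))
        - (((((NormedSpace.exp (-C)).trace)⁻¹ • NormedSpace.exp (-C)) * C).trace).re
      = Real.log (((NormedSpace.exp (-C)).trace).re)) ∧
    IsGreatest {x : ℝ | ∃ ρ : Matrix (Fin d) (Fin d) ℂ, ρ.PosSemidef ∧ ρ.trace = 1 ∧
        x = vnEntropy ρ - ((ρ * C).trace).re}
      (Real.log (((NormedSpace.exp (-C)).trace).re)) := by
  set U := hC.eigenvectorUnitary with hU
  set μ := hC.eigenvalues with hμ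
  have hCdec : C = (U : Matrix (Fin d) (Fin d) ℂ) * diagonal (fun i => (μ i : ℂ)) *
      (U : Matrix (Fin d) (Fin d) ℂ)ᴴ := hC.spectral_theorem
  have hE : NormedSpace.exp (-C) = (U : Matrix (Fin d) (Fin d) ℂ) *
      diagonal (fun i => (Real.exp (-μ i) : ℂ)) * (U : Matrix (Fin d) (Fin d) ℂ)ᴴ :=
    exp_decomp U μ C hCdec
  set S : ℝ := ∑ i, Real.exp (-μ i) with hSdef
  have hSpos : 0 < S := Finset.sum_pos (fun i _ => Real.exp_pos _) ⟨⟨0, hd⟩, Finset.mem_univ _⟩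
  have hZ : (NormedSpace.exp (-C)).trace = (S : ℂ) := by
    rw [hE, trace_decomp, hSdef]; norm_cast
  have hZre : ((NormedSpace.exp (-C)).trace).re = S := by rw [hZ, Complex.ofReal_re]
  set g : Fin d → ℝ := fun i => S⁻¹ * Real.exp (-μ i) with hgdef
  have hgnn : ∀ i, 0 ≤ g i := fun i =>
    mul_nonneg (inv_nonneg.mpr hSpos.le) (Real.exp_pos _).le
  have hgsum : ∑ i, g i = 1 := by
    rw [hgdef, ← Finset.mul_sum, ← hSdef]
    field_simp
  have hρdec : ((NormedSpace.exp (-C)).trace)⁻¹ • NormedSpace.exp (-C)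
      = (U : Matrix (Fin d) (Fin d) ℂ) * diagonal (fun i => (g i : ℂ)) *
        (U : Matrix (Fin d) (Fin d) ℂ)ᴴ := by
    rw [hZ, hE, smul_decomp]
    congr 2
    rw [Matrix.diagonal_eq_diagonal_iff]
    intro i
    simp only [hgdef]
    push_cast
    ring
  have htrG : (((((NormedSpace.exp (-C)).trace)⁻¹ • NormedSpace.exp (-C)) * C).trace).re
      = ∑ i, g i * μ i := by
    rw [hρdec, hCdec]
    exact trace_mul_decomp_re U g μ
  have heq : vnEntropy (((NormedSpace.exp (-C)).trace)⁻¹ • NormedSpace.exp (-C))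
      - (((((NormedSpace.exp (-C)).trace)⁻¹ • NormedSpace.exp (-C)) * C).trace).re
      = Real.log S := by
    rw [htrG, vnEntropy_decomp U g _ hρdec]
    exact scalar_gibbs_eq μ hd S hSdef
  have hub : ∀ ρ : Matrix (Fin d) (Fin d) ℂ, ρ.PosSemidef → ρ.trace = 1 →
      vnEntropy ρ - ((ρ * C).trace).re ≤ Real.log S := by
    intro ρ hPSD htr1
    have hρh : ρ.IsHermitian := hPSD.1
    set W := hρh.eigenvectorUnitary with hW
    set p := hρh.eigenvalues with hp
    have hρdec2 : ρ = (W : Matrix (Fin d) (Fin d) ℂ) * diagonal (fun i => (p i : ℂ)) *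
        (W : Matrix (Fin d) (Fin d) ℂ)ᴴ := hρh.spectral_theorem
    have hpnn : ∀ i, 0 ≤ p i := fun i => hPSD.eigenvalues_nonneg i
    have hpsum : ∑ i, p i = 1 := by
      have h1 : ρ.trace = ((∑ i, p i : ℝ) : ℂ) := by
        rw [hρdec2, trace_decomp]; push_cast; rfl
      rw [htr1] at h1
      exact_mod_cast h1.symm
    set M := (W : Matrix (Fin d) (Fin d) ℂ)ᴴ * (U : Matrix (Fin d) (Fin d) ℂ) with hM
    have hM1 : M * Mᴴ = 1 := by
      rw [hM, conjTranspose_mul, conjTranspose_conjTranspose]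
      calc (W : Matrix (Fin d) (Fin d) ℂ)ᴴ * (U : Matrix (Fin d) (Fin d) ℂ) *
            ((U : Matrix (Fin d) (Fin d) ℂ)ᴴ * (W : Matrix (Fin d) (Fin d) ℂ))
          = (W : Matrix (Fin d) (Fin d) ℂ)ᴴ * ((U : Matrix (Fin d) (Fin d) ℂ) *
            (U : Matrix (Fin d) (Fin d) ℂ)ᴴ) * (W : Matrix (Fin d) (Fin d) ℂ) := by
            simp only [mul_assoc]
        _ = 1 := by rw [self_mul_conjT U, mul_one, conjT_mul_self W]
    have hM2 : Mᴴ * M = 1 := by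
      rw [hM, conjTranspose_mul, conjTranspose_conjTranspose]
      calc (U : Matrix (Fin d) (Fin d) ℂ)ᴴ * (W : Matrix (Fin d) (Fin d) ℂ) *
            ((W : Matrix (Fin d) (Fin d) ℂ)ᴴ * (U : Matrix (Fin d) (Fin d) ℂ))
          = (U : Matrix (Fin d) (Fin d) ℂ)ᴴ * ((W : Matrix (Fin d) (Fin d) ℂ) *
            (W : Matrix (Fin d) (Fin d) ℂ)ᴴ) * (U : Matrix (Fin d) (Fin d) ℂ) := by
            simp only [mul_assoc]
        _ = 1 := by rw [self_mul_conjT W, mul_one, conjT_mul_self U]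
    set w : Fin d → Fin d → ℝ := fun i j => Complex.normSq (M i j) with hw
    have hwnn : ∀ i j, 0 ≤ w i j := fun i j => Complex.normSq_nonneg _
    have hrow : ∀ i, ∑ j, w i j = 1 := by
      intro i
      have h1 : (∑ j, ((w i j : ℝ) : ℂ)) = 1 := by
        have := congrFun (congrFun hM1 i) i
        rw [Matrix.mul_apply] at this
        simpa [Matrix.conjTranspose_apply, Matrix.one_apply, RCLike.star_def,
          Complex.mul_conj] using this
      exact_mod_cast h1
    have hcol : ∀ j, ∑ i, w i j = 1 := by
      intro j
      have h1 : (∑ i, ((w i j : ℝ) : ℂ)) = 1 := by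
        have := congrFun (congrFun hM2 j) j
        rw [Matrix.mul_apply] at this
        simpa [Matrix.conjTranspose_apply, Matrix.one_apply, RCLike.star_def,
          mul_comm, Complex.mul_conj] using this
      exact_mod_cast h1
    set b : Fin d → ℝ := fun i => ∑ j, w i j * μ j with hb
    have hK : ∀ i, ((M * diagonal (fun j => (μ j : ℂ)) * Mᴴ) i i) = ((b i : ℝ) : ℂ) := by
      intro i
      rw [Matrix.mul_apply]
      have : ∀ j, (M * diagonal (fun j => (μ j : ℂ))) i j * Mᴴ j i
          = ((w i j * μ j : ℝ) : ℂ) := by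
        intro j
        rw [Matrix.mul_diagonal, Matrix.conjTranspose_apply, RCLike.star_def]
        push_cast
        rw [mul_comm (M i j) ((μ j : ℂ)), mul_assoc, Complex.mul_conj]
        ring
      rw [Finset.sum_congr rfl (fun j _ => this j), hb]
      norm_cast
    have htrρC : ((ρ * C).trace).re = ∑ i, p i * b i := by
      have h1 : (ρ * C).trace = (diagonal (fun i => (p i : ℂ)) *
          (M * diagonal (fun j => (μ j : ℂ)) * Mᴴ)).trace := by
        rw [hρdec2, hCdec, trace_mix, ← hM]
      have h2 : (diagonal (fun i => (p i : ℂ)) *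
          (M * diagonal (fun j => (μ j : ℂ)) * Mᴴ)).trace = ((∑ i, p i * b i : ℝ) : ℂ) := by
        rw [Matrix.trace]
        have : ∀ i, (diagonal (fun i => (p i : ℂ)) *
            (M * diagonal (fun j => (μ j : ℂ)) * Mᴴ)).diag i = ((p i * b i : ℝ) : ℂ) := by
          intro i
          rw [Matrix.diag_apply, Matrix.diagonal_mul, hK i]
          push_cast
          ring
        rw [Finset.sum_congr rfl (fun i _ => this i)]
        push_cast
        rfl
      rw [h1, h2, Complex.ofReal_re]
    rw [htrρC, vnEntropy_decomp W p ρ hρdec2]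
    refine le_trans (scalar_jensen p b hpnn hpsum) ?_
    apply Real.log_le_log
    · exact Finset.sum_pos (fun i _ => Real.exp_pos _) ⟨⟨0, hd⟩, Finset.mem_univ _⟩
    · exact scalar_exp_convex w μ hwnn hrow hcol
  rw [hZre]
  refine ⟨heq, ⟨((NormedSpace.exp (-C)).trace)⁻¹ • NormedSpace.exp (-C), ?_, ?_, heq.symm⟩, ?_⟩
  · rw [hρdec]
    exact Matrix.PosSemidef.mul_mul_conjTranspose_same
      (Matrix.posSemidef_diagonal_iff.mpr (fun i => by
        rw [Complex.zero_le_real]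
        exact hgnn i)) _
  · rw [hρdec, trace_decomp]
    have : ∑ i, ((g i : ℝ) : ℂ) = ((∑ i, g i : ℝ) : ℂ) := by push_cast; rfl
    rw [this, hgsum]
    norm_num
  · rintro x ⟨ρ, hPSD, htr1, rfl⟩
    exact hub ρ hPSD htr1
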